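/- Let 0 < α ≤ 1, q ≥ 2 with conjugate exponent q' = q/(q−1), C_μ > 0, and let μ be an α-dimensional Borel measure on ℝ with constant C_μ. Then there exists a constant C (depending only on α, q, C_μ) such that for every b > 0 and all measurable functions g, h : ℝ × ℝ → ℂ, |∫∫∫∫ g(x,t) h(x',t') 1_{(0,b)}(x − x') dμ(x) dt dμ(x') dt'| ≤ C b^{2α/q} N(g) N(h), where all four variables x, t, x', t' range over (0,1), 1_{(0,b)}(x−x') equals 1 if 0 < x − x' < b and 0 otherwise, and N(g) = (∫_{(0,1)} (∫_0^1 |g(x,t)| dt)^{q'} dμ(x))^{1/q'}. -/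

import Mathlib

open MeasureTheory Filter Set
open scoped ENNReal NNReal

/-- The mixed norm `N(g) = ‖g‖_{L^{q'}_x(dμ) L^1_t}
  = (∫_{(0,1)} (∫_0^1 |g(x,t)| dt)^{q'} dμ(x))^{1/q'}`. -/
noncomputable def mixedNorm (μ : Measure ℝ) (q' : ℝ) (g : ℝ → ℝ → ℂ) : ℝ≥0∞ :=
  (∫⁻ x in Set.Ioo (0:ℝ) 1,
      (∫⁻ t in Set.Ioo (0:ℝ) 1, (‖g x t‖₊ : ℝ≥0∞)) ^ q' ∂μ) ^ (1 / q')

private lemma rpow_succ_le_aux {x a : ℝ≥0∞} {s : ℝ} (hx : x ≤ a) (hs : 0 ≤ s) :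
    x ^ (s + 1) ≤ a ^ s * x := by
  rcases eq_or_ne x 0 with rfl | hx0
  · simp [ENNReal.zero_rpow_of_pos (by linarith : (0:ℝ) < s + 1)]
  rcases eq_or_ne x ⊤ with rfl | hxt
  · have ha : a = ⊤ := top_le_iff.mp hx
    subst ha
    rcases hs.eq_or_lt with rfl | hs'
    · simp
    · simp [ENNReal.top_rpow_of_pos hs', ENNReal.top_rpow_of_pos (by linarith : (0:ℝ) < s + 1)]
  · rw [ENNReal.rpow_add _ _ hx0 hxt, ENNReal.rpow_one]
    exact mul_le_mul_left (ENNReal.rpow_le_rpow hx hs) x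

/-- Lemma 2.1, estimate (6): the bilinear estimate with kernel `1_{(0,b)}(x − x')` for an
`α`-dimensional measure `μ` with constant `C_μ`. -/
theorem stmt7 (α q Cμ : ℝ) (hα : 0 < α) (hα1 : α ≤ 1) (hq : 2 ≤ q) (hCμ : 0 < Cμ)
    (μ : Measure ℝ)
    (hμ : ∀ x : ℝ, ∀ r : ℝ, 0 < r → μ (Metric.ball x r) ≤ ENNReal.ofReal (Cμ * r ^ α)) :
    ∃ C > 0, ∀ b : ℝ, 0 < b → ∀ g h : ℝ → ℝ → ℂ,
      Measurable (Function.uncurry g) → Measurable (Function.uncurry h) →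
      ENNReal.ofReal (norm
        (∫ x in Set.Ioo (0:ℝ) 1, ∫ t in Set.Ioo (0:ℝ) 1, ∫ x' in Set.Ioo (0:ℝ) 1,
          ∫ t' in Set.Ioo (0:ℝ) 1,
            (if x - x' ∈ Set.Ioo (0:ℝ) b then g x t * h x' t' else 0)
          ∂volume ∂μ ∂volume ∂μ)) ≤
      ENNReal.ofReal (C * b ^ (2 * α / q)) *
        mixedNorm μ (q / (q - 1)) g * mixedNorm μ (q / (q - 1)) h := by
  have hq0 : (0:ℝ) < q := by linarith
  have hq1 : (1:ℝ) < q := by linarith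
  have hconj : Real.HolderConjugate q (q / (q - 1)) :=
    Real.HolderConjugate.conjExponent hq1
  set q' : ℝ := q / (q - 1) with hq'def
  have hq'pos : 0 < q' := hconj.symm.pos
  refine ⟨Cμ ^ (2 / q), Real.rpow_pos_of_pos hCμ _, ?_⟩
  intro b hb g h hgm hhm
  set ν := μ.restrict (Set.Ioo (0:ℝ) 1) with hνdef
  set τ := volume.restrict (Set.Ioo (0:ℝ) 1) with hτdef
  haveI : IsFiniteMeasure ν := by
    constructor
    rw [hνdef, Measure.restrict_apply_univ]
    calc μ (Set.Ioo (0:ℝ) 1) ≤ μ (Metric.ball (0:ℝ) 2) := by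
          apply measure_mono
          rw [Real.ball_eq_Ioo]
          exact Set.Ioo_subset_Ioo (by norm_num) (by norm_num)
      _ ≤ ENNReal.ofReal (Cμ * 2 ^ α) := hμ 0 2 (by norm_num)
      _ < ⊤ := ENNReal.ofReal_lt_top
  set M : ℝ≥0∞ := ENNReal.ofReal (Cμ * b ^ α) with hMdef
  have hMne : M ≠ ⊤ := ENNReal.ofReal_ne_top
  set K : ℝ → ℝ → ℝ≥0∞ := fun x x' => if x - x' ∈ Set.Ioo (0:ℝ) b then 1 else 0 with hKdef
  have hKval : ∀ x x', (x - x' ∈ Set.Ioo (0:ℝ) b → K x x' = 1) ∧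
      (x - x' ∉ Set.Ioo (0:ℝ) b → K x x' = 0) := by
    intro x x'
    constructor <;> intro hxx <;> simp only [hKdef] <;>
      [exact if_pos hxx; exact if_neg hxx]
  have hK01 : ∀ x x', K x x' = 0 ∨ K x x' = 1 := by
    intro x x'
    by_cases hxx : x - x' ∈ Set.Ioo (0:ℝ) b
    · exact Or.inr ((hKval x x').1 hxx)
    · exact Or.inl ((hKval x x').2 hxx)
  have hKu : Measurable (Function.uncurry K) := by
    apply Measurable.ite _ measurable_const measurable_const
    exact (measurable_fst.sub measurable_snd) measurableSet_Ioo
  -- row and column masses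
  have hrow : ∀ x', ∫⁻ x, K x x' ∂ν ≤ M := by
    intro x'
    have hiff : ∀ x : ℝ, x - x' ∈ Set.Ioo (0:ℝ) b ↔ x ∈ Set.Ioo x' (x' + b) := by
      intro x
      simp only [Set.mem_Ioo]
      constructor <;> rintro ⟨h1, h2⟩ <;> constructor <;> linarith
    calc ∫⁻ x, K x x' ∂ν
        = ∫⁻ x, (Set.Ioo x' (x' + b)).indicator (fun _ => (1:ℝ≥0∞)) x ∂ν := by
          apply lintegral_congr
          intro x
          by_cases hx : x ∈ Set.Ioo x' (x' + b)
          · rw [Set.indicator_of_mem hx]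
            exact (hKval x x').1 ((hiff x).mpr hx)
          · rw [Set.indicator_of_notMem hx]
            exact (hKval x x').2 (fun hh => hx ((hiff x).mp hh))
      _ = ν (Set.Ioo x' (x' + b)) := lintegral_indicator_one measurableSet_Ioo
      _ ≤ μ (Set.Ioo x' (x' + b)) := by
          rw [hνdef, Measure.restrict_apply measurableSet_Ioo]
          exact measure_mono Set.inter_subset_left
      _ ≤ μ (Metric.ball (x' + b / 2) b) := by
          apply measure_mono
          rw [Real.ball_eq_Ioo]
          exact Set.Ioo_subset_Ioo (by linarith) (by linarith)
      _ ≤ M := hμ _ b hb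
  have hcol : ∀ x, ∫⁻ x', K x x' ∂ν ≤ M := by
    intro x
    have hiff : ∀ x' : ℝ, x - x' ∈ Set.Ioo (0:ℝ) b ↔ x' ∈ Set.Ioo (x - b) x := by
      intro x'
      simp only [Set.mem_Ioo]
      constructor <;> rintro ⟨h1, h2⟩ <;> constructor <;> linarith
    calc ∫⁻ x', K x x' ∂ν
        = ∫⁻ x', (Set.Ioo (x - b) x).indicator (fun _ => (1:ℝ≥0∞)) x' ∂ν := by
          apply lintegral_congr
          intro x'
          by_cases hx : x' ∈ Set.Ioo (x - b) x
          · rw [Set.indicator_of_mem hx]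
            exact (hKval x x').1 ((hiff x').mpr hx)
          · rw [Set.indicator_of_notMem hx]
            exact (hKval x x').2 (fun hh => hx ((hiff x').mp hh))
      _ = ν (Set.Ioo (x - b) x) := lintegral_indicator_one measurableSet_Ioo
      _ ≤ μ (Set.Ioo (x - b) x) := by
          rw [hνdef, Measure.restrict_apply measurableSet_Ioo]
          exact measure_mono Set.inter_subset_left
      _ ≤ μ (Metric.ball (x - b / 2) b) := by
          apply measure_mono
          rw [Real.ball_eq_Ioo]
          exact Set.Ioo_subset_Ioo (by linarith) (by linarith)
      _ ≤ M := hμ _ b hb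
  -- the main players
  set G : ℝ → ℝ≥0∞ := fun x => ∫⁻ t, (‖g x t‖₊ : ℝ≥0∞) ∂τ with hGdef
  set H : ℝ → ℝ≥0∞ := fun x' => ∫⁻ t, (‖h x' t‖₊ : ℝ≥0∞) ∂τ with hHdef
  have hGmeas : Measurable G := Measurable.lintegral_prod_right hgm.enorm
  have hHmeas : Measurable H := Measurable.lintegral_prod_right hhm.enorm
  set Φ : ℝ → ℝ≥0∞ := fun x => ∫⁻ x', K x x' * H x' ∂ν with hΦdef
  set Ψ : ℝ → ℝ≥0∞ := fun x => ∫⁻ x', K x x' * H x' ^ q' ∂ν with hΨdef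
  have hKH : Measurable (Function.uncurry fun x x' => K x x' * H x') :=
    hKu.mul (hHmeas.comp measurable_snd)
  have hKHq : Measurable (Function.uncurry fun x x' => K x x' * H x' ^ q') :=
    hKu.mul ((hHmeas.comp measurable_snd).pow_const q')
  have hΦmeas : Measurable Φ := Measurable.lintegral_prod_right hKH
  have hΨmeas : Measurable Ψ := Measurable.lintegral_prod_right hKHq
  set A : ℝ≥0∞ := ∫⁻ x, G x ^ q' ∂ν with hAdef
  set B : ℝ≥0∞ := ∫⁻ x', H x' ^ q' ∂ν with hBdef
  have hmixg : mixedNorm μ q' g = A ^ (1 / q') := rfl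
  have hmixh : mixedNorm μ q' h = B ^ (1 / q') := rfl
  -- Step A : bound the fourfold integral by ∫ G * Φ
  have stepA : ENNReal.ofReal (norm
      (∫ x in Set.Ioo (0:ℝ) 1, ∫ t in Set.Ioo (0:ℝ) 1, ∫ x' in Set.Ioo (0:ℝ) 1,
          ∫ t' in Set.Ioo (0:ℝ) 1,
            (if x - x' ∈ Set.Ioo (0:ℝ) b then g x t * h x' t' else 0)
          ∂volume ∂μ ∂volume ∂μ)) ≤ ∫⁻ x, G x * Φ x ∂ν := by
    have inner3 : ∀ x t x', (‖∫ t' in Set.Ioo (0:ℝ) 1,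
        (if x - x' ∈ Set.Ioo (0:ℝ) b then g x t * h x' t' else 0) ∂volume‖₊ : ℝ≥0∞) ≤
        K x x' * ((‖g x t‖₊ : ℝ≥0∞) * H x') := by
      intro x t x'
      by_cases hP : x - x' ∈ Set.Ioo (0:ℝ) b
      · rw [(hKval x x').1 hP, one_mul]
        simp only [if_pos hP]
        calc (‖∫ t' in Set.Ioo (0:ℝ) 1, g x t * h x' t' ∂volume‖₊ : ℝ≥0∞)
            ≤ ∫⁻ t', (‖g x t * h x' t'‖₊ : ℝ≥0∞) ∂τ :=
              enorm_integral_le_lintegral_enorm _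
          _ = (‖g x t‖₊ : ℝ≥0∞) * H x' := by
              simp_rw [nnnorm_mul, ENNReal.coe_mul]
              exact lintegral_const_mul _ (Measurable.enorm hhm.of_uncurry_left)
      · rw [(hKval x x').2 hP]
        simp only [if_neg hP]
        simp
    have inner2 : ∀ x t, (‖∫ x' in Set.Ioo (0:ℝ) 1, ∫ t' in Set.Ioo (0:ℝ) 1,
        (if x - x' ∈ Set.Ioo (0:ℝ) b then g x t * h x' t' else 0) ∂volume ∂μ‖₊ : ℝ≥0∞) ≤
        (‖g x t‖₊ : ℝ≥0∞) * Φ x := by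
      intro x t
      calc (‖∫ x' in Set.Ioo (0:ℝ) 1, ∫ t' in Set.Ioo (0:ℝ) 1,
            (if x - x' ∈ Set.Ioo (0:ℝ) b then g x t * h x' t' else 0) ∂volume ∂μ‖₊ : ℝ≥0∞)
          ≤ ∫⁻ x', (‖∫ t' in Set.Ioo (0:ℝ) 1,
              (if x - x' ∈ Set.Ioo (0:ℝ) b then g x t * h x' t' else 0) ∂volume‖₊ : ℝ≥0∞) ∂ν :=
            enorm_integral_le_lintegral_enorm _
        _ ≤ ∫⁻ x', K x x' * ((‖g x t‖₊ : ℝ≥0∞) * H x') ∂ν :=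
            lintegral_mono fun x' => inner3 x t x'
        _ = ∫⁻ x', (‖g x t‖₊ : ℝ≥0∞) * (K x x' * H x') ∂ν := by
            apply lintegral_congr
            intro x'
            ring
        _ = (‖g x t‖₊ : ℝ≥0∞) * Φ x :=
            lintegral_const_mul _ (hKu.of_uncurry_left.mul hHmeas)
    calc ENNReal.ofReal (norm
        (∫ x in Set.Ioo (0:ℝ) 1, ∫ t in Set.Ioo (0:ℝ) 1, ∫ x' in Set.Ioo (0:ℝ) 1,
          ∫ t' in Set.Ioo (0:ℝ) 1,
            (if x - x' ∈ Set.Ioo (0:ℝ) b then g x t * h x' t' else 0)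
          ∂volume ∂μ ∂volume ∂μ))
        = (‖∫ x in Set.Ioo (0:ℝ) 1, ∫ t in Set.Ioo (0:ℝ) 1, ∫ x' in Set.Ioo (0:ℝ) 1,
          ∫ t' in Set.Ioo (0:ℝ) 1,
            (if x - x' ∈ Set.Ioo (0:ℝ) b then g x t * h x' t' else 0)
          ∂volume ∂μ ∂volume ∂μ‖₊ : ℝ≥0∞) := by
          exact ofReal_norm ..
      _ ≤ ∫⁻ x, (‖∫ t in Set.Ioo (0:ℝ) 1, ∫ x' in Set.Ioo (0:ℝ) 1,
          ∫ t' in Set.Ioo (0:ℝ) 1,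
            (if x - x' ∈ Set.Ioo (0:ℝ) b then g x t * h x' t' else 0)
          ∂volume ∂μ ∂volume‖₊ : ℝ≥0∞) ∂ν := enorm_integral_le_lintegral_enorm _
      _ ≤ ∫⁻ x, G x * Φ x ∂ν := by
          apply lintegral_mono
          intro x
          calc (‖∫ t in Set.Ioo (0:ℝ) 1, ∫ x' in Set.Ioo (0:ℝ) 1,
              ∫ t' in Set.Ioo (0:ℝ) 1,
                (if x - x' ∈ Set.Ioo (0:ℝ) b then g x t * h x' t' else 0)
              ∂volume ∂μ ∂volume‖₊ : ℝ≥0∞)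
              ≤ ∫⁻ t, (‖∫ x' in Set.Ioo (0:ℝ) 1, ∫ t' in Set.Ioo (0:ℝ) 1,
                (if x - x' ∈ Set.Ioo (0:ℝ) b then g x t * h x' t' else 0)
                ∂volume ∂μ‖₊ : ℝ≥0∞) ∂τ := enorm_integral_le_lintegral_enorm _
            _ ≤ ∫⁻ t, (‖g x t‖₊ : ℝ≥0∞) * Φ x ∂τ := lintegral_mono fun t => inner2 x t
            _ = G x * Φ x := lintegral_mul_const _ (Measurable.enorm hgm.of_uncurry_left)
  -- Step B : the bilinear estimate
  have hstep1 : ∀ x, Φ x ≤ M ^ (1 / q) * Ψ x ^ (1 / q') := by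
    intro x
    have hmain := ENNReal.lintegral_mul_le_Lp_mul_Lq ν hconj
      (f := fun x' => K x x') (g := fun x' => K x x' * H x')
      (hKu.of_uncurry_left).aemeasurable (hKu.of_uncurry_left.mul hHmeas).aemeasurable
    refine le_trans (le_of_eq ?_) (le_trans hmain (mul_le_mul' ?_ ?_))
    · apply lintegral_congr
      intro x'
      rcases hK01 x x' with h0 | h0 <;> simp [Pi.mul_apply, h0]
    · apply ENNReal.rpow_le_rpow _ (by positivity)
      refine le_trans (le_of_eq (lintegral_congr fun x' => ?_)) (hcol x)
      rcases hK01 x x' with h0 | h1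
      · simp [h0, ENNReal.zero_rpow_of_pos hq0]
      · simp [h1]
    · apply le_of_eq
      congr 1
      apply lintegral_congr
      intro x'
      rcases hK01 x x' with h0 | h1
      · simp [h0, ENNReal.zero_rpow_of_pos hconj.symm.pos]
      · simp [h1]
  have hΨleB : ∀ x, Ψ x ≤ B := by
    intro x
    refine lintegral_mono fun x' => ?_
    rcases hK01 x x' with h0 | h0 <;> simp [h0]
  have hΨint : ∫⁻ x, Ψ x ∂ν ≤ M * B := by
    have hswap : ∫⁻ x, Ψ x ∂ν = ∫⁻ x', ∫⁻ x, K x x' * H x' ^ q' ∂ν ∂ν :=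
      lintegral_lintegral_swap hKHq.aemeasurable
    rw [hswap]
    calc ∫⁻ x', ∫⁻ x, K x x' * H x' ^ q' ∂ν ∂ν
        = ∫⁻ x', (∫⁻ x, K x x' ∂ν) * H x' ^ q' ∂ν := by
          apply lintegral_congr
          intro x'
          exact lintegral_mul_const _ (hKu.comp (measurable_id.prodMk measurable_const))
      _ ≤ ∫⁻ x', M * H x' ^ q' ∂ν :=
          lintegral_mono fun x' => mul_le_mul_left (hrow x') _
      _ = M * B := lintegral_const_mul' _ _ hMne
  have hΦq : ∫⁻ x, Φ x ^ q ∂ν ≤ M * (B ^ (q - 2) * (M * B)) := by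
    have h1 : ∀ x, Φ x ^ q ≤ M * (B ^ (q - 2) * Ψ x) := by
      intro x
      calc Φ x ^ q ≤ (M ^ (1 / q) * Ψ x ^ (1 / q')) ^ q :=
            ENNReal.rpow_le_rpow (hstep1 x) (le_of_lt hq0)
        _ = M * Ψ x ^ (q - 1) := by
            rw [ENNReal.mul_rpow_of_nonneg _ _ (le_of_lt hq0), ← ENNReal.rpow_mul,
              ← ENNReal.rpow_mul, one_div_mul_cancel (ne_of_gt hq0), ENNReal.rpow_one]
            congr 1
            rw [hq'def]
            field_simp
        _ ≤ M * (B ^ (q - 2) * Ψ x) := by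
            apply mul_le_mul_right
            have hkey : Ψ x ^ ((q - 2) + 1) ≤ B ^ (q - 2) * Ψ x :=
              rpow_succ_le_aux (hΨleB x) (by linarith)
            simpa [show q - 2 + 1 = q - 1 by ring] using hkey
    calc ∫⁻ x, Φ x ^ q ∂ν ≤ ∫⁻ x, M * (B ^ (q - 2) * Ψ x) ∂ν := lintegral_mono h1
      _ = M * (B ^ (q - 2) * ∫⁻ x, Ψ x ∂ν) := by
          rw [lintegral_const_mul' _ _ hMne, lintegral_const_mul _ hΨmeas]
      _ ≤ M * (B ^ (q - 2) * (M * B)) := by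
          exact mul_le_mul_right (mul_le_mul_right hΨint _) _
  have hfinal : ∫⁻ x, G x * Φ x ∂ν ≤ A ^ (1 / q') * (∫⁻ x, Φ x ^ q ∂ν) ^ (1 / q) := by
    have hmain := ENNReal.lintegral_mul_le_Lp_mul_Lq ν hconj.symm
      (f := G) (g := Φ) hGmeas.aemeasurable hΦmeas.aemeasurable
    simpa [Pi.mul_apply] using hmain
  -- arithmetic for the constant
  have hq2 : (M * (B ^ (q - 2) * (M * B))) ^ (1 / q) = M ^ (2 / q) * B ^ (1 / q') := by
    have hBB : B ^ (q - 2) * B = B ^ (q - 1) := by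
      rw [show q - 1 = (q - 2) + 1 by ring,
        ENNReal.rpow_add_of_nonneg _ _ (by linarith) zero_le_one, ENNReal.rpow_one]
    have hMM : M * M = M ^ (2:ℝ) := by
      rw [show (2:ℝ) = 1 + 1 by norm_num,
        ENNReal.rpow_add_of_nonneg _ _ zero_le_one zero_le_one, ENNReal.rpow_one]
    have hre : M * (B ^ (q - 2) * (M * B)) = M ^ (2:ℝ) * B ^ (q - 1) := by
      rw [← hMM, ← hBB]; ring
    rw [hre, ENNReal.mul_rpow_of_nonneg _ _ (by positivity), ← ENNReal.rpow_mul,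
      ← ENNReal.rpow_mul]
    congr 1
    · congr 1
      rw [mul_one_div]
    · congr 1
      rw [hq'def]
      field_simp
  have hM2q : M ^ (2 / q : ℝ) = ENNReal.ofReal (Cμ ^ (2 / q) * b ^ (2 * α / q)) := by
    rw [hMdef, ENNReal.ofReal_rpow_of_pos (by positivity)]
    congr 1
    rw [Real.mul_rpow (le_of_lt hCμ) (by positivity), ← Real.rpow_mul hb.le]
    · congr 1
      ring
  calc ENNReal.ofReal (norm
      (∫ x in Set.Ioo (0:ℝ) 1, ∫ t in Set.Ioo (0:ℝ) 1, ∫ x' in Set.Ioo (0:ℝ) 1,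
        ∫ t' in Set.Ioo (0:ℝ) 1,
          (if x - x' ∈ Set.Ioo (0:ℝ) b then g x t * h x' t' else 0)
        ∂volume ∂μ ∂volume ∂μ)) ≤ ∫⁻ x, G x * Φ x ∂ν := stepA
    _ ≤ A ^ (1 / q') * (∫⁻ x, Φ x ^ q ∂ν) ^ (1 / q) := hfinal
    _ ≤ A ^ (1 / q') * (M * (B ^ (q - 2) * (M * B))) ^ (1 / q) := by
        exact mul_le_mul_right (ENNReal.rpow_le_rpow hΦq (by positivity)) _
    _ = ENNReal.ofReal (Cμ ^ (2 / q) * b ^ (2 * α / q)) * A ^ (1 / q') * B ^ (1 / q') := by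
        rw [hq2, hM2q]; ring
    _ = ENNReal.ofReal (Cμ ^ (2 / q) * b ^ (2 * α / q)) *
        mixedNorm μ (q / (q - 1)) g * mixedNorm μ (q / (q - 1)) h := by
        rw [← hq'def, hmixg, hmixh]
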